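/- Let G be the group of isometries of R³ generated by the screw motion S(x,y,z) = (−y, x, z+1/4) and the translations (x,y,z) ↦ (x+1,y,z), (x,y,z) ↦ (x,y+1,z). Then G acts freely on R³, and S⁴ is the translation by (0,0,1). -/

import Mathlib

/-- The translation of `ℝ³` by a vector `v`. -/
noncomputable def transBy (v : ℝ × ℝ × ℝ) : Equiv.Perm (ℝ × ℝ × ℝ) where
  toFun p := (p.1 + v.1, p.2.1 + v.2.1, p.2.2 + v.2.2)
  invFun p := (p.1 - v.1, p.2.1 - v.2.1, p.2.2 - v.2.2)
  left_inv p := by obtain ⟨x, y, z⟩ := p; simp [Prod.ext_iff]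
  right_inv p := by obtain ⟨x, y, z⟩ := p; simp [Prod.ext_iff]

/-- The quarter-turn screw motion `S : (x,y,z) ↦ (-y, x, z+1/4)` generating
the tetracosm space group (international no. 76, `P4₁`). -/
noncomputable def tetraS : Equiv.Perm (ℝ × ℝ × ℝ) where
  toFun p := (-p.2.1, p.1, p.2.2 + 1/4)
  invFun p := (p.2.1, -p.1, p.2.2 - 1/4)
  left_inv p := by obtain ⟨x, y, z⟩ := p; simp [Prod.ext_iff]
  right_inv p := by obtain ⟨x, y, z⟩ := p; simp [Prod.ext_iff]

/-- The tetracosm space group, generated by the screw motion `S` and the horizontal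
unit translations. -/
noncomputable def tetraGroup : Subgroup (Equiv.Perm (ℝ × ℝ × ℝ)) :=
  Subgroup.closure {tetraS, transBy (1, 0, 0), transBy (0, 1, 0)}

lemma transBy_apply (v p : ℝ × ℝ × ℝ) :
    transBy v p = (p.1 + v.1, p.2.1 + v.2.1, p.2.2 + v.2.2) := rfl

lemma tetraS_apply (p : ℝ × ℝ × ℝ) : tetraS p = (-p.2.1, p.1, p.2.2 + 1/4) := rfl

lemma tetraS_inv_apply (p : ℝ × ℝ × ℝ) : tetraS⁻¹ p = (p.2.1, -p.1, p.2.2 - 1/4) := rfl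

lemma transBy_mul (v w : ℝ × ℝ × ℝ) :
    transBy v * transBy w = transBy (v.1 + w.1, v.2.1 + w.2.1, v.2.2 + w.2.2) := by
  ext p <;> simp [transBy_apply, Equiv.Perm.mul_apply] <;> ring

lemma transBy_zero : transBy (0, 0, 0) = 1 := by
  ext p <;> simp [transBy_apply]

lemma transBy_zero' : transBy 0 = 1 := transBy_zero

lemma conj_transBy (a b : ℝ) :
    tetraS * transBy (a, b, 0) * tetraS⁻¹ = transBy (-b, a, 0) := by
  ext p <;>
    simp [transBy_apply, tetraS_apply, tetraS_inv_apply, Equiv.Perm.mul_apply] <;> ring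

lemma conj_transBy_inv (a b : ℝ) :
    tetraS⁻¹ * transBy (a, b, 0) * tetraS = transBy (b, -a, 0) := by
  ext p <;>
    simp [transBy_apply, tetraS_apply, tetraS_inv_apply, Equiv.Perm.mul_apply] <;> ring

lemma tetraConjZpow (k : ℤ) : ∀ a b : ℤ, ∃ c d : ℤ,
    tetraS ^ k * transBy ((a : ℝ), (b : ℝ), 0) * (tetraS ^ k)⁻¹
      = transBy ((c : ℝ), (d : ℝ), 0) := by
  induction k using Int.induction_on with
  | zero => intro a b; exact ⟨a, b, by simp⟩
  | succ k ih =>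
      intro a b
      obtain ⟨c, d, hcd⟩ := ih (-b) a
      push_cast at hcd
      refine ⟨c, d, ?_⟩
      rw [zpow_add_one, mul_inv_rev]
      calc tetraS ^ (k:ℤ) * tetraS * transBy ((a : ℝ), (b : ℝ), 0) * (tetraS⁻¹ * (tetraS ^ (k:ℤ))⁻¹)
          = tetraS ^ (k:ℤ) * (tetraS * transBy ((a : ℝ), (b : ℝ), 0) * tetraS⁻¹) * (tetraS ^ (k:ℤ))⁻¹ := by
            group
        _ = tetraS ^ (k:ℤ) * transBy ((-b : ℝ), (a : ℝ), 0) * (tetraS ^ (k:ℤ))⁻¹ := by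
            rw [conj_transBy]
        _ = transBy ((c : ℝ), (d : ℝ), 0) := hcd
  | pred k ih =>
      intro a b
      obtain ⟨c, d, hcd⟩ := ih b (-a)
      push_cast at hcd
      refine ⟨c, d, ?_⟩
      rw [zpow_sub_one, mul_inv_rev, inv_inv]
      calc tetraS ^ (-(k:ℤ)) * tetraS⁻¹ * transBy ((a : ℝ), (b : ℝ), 0) * (tetraS * (tetraS ^ (-(k:ℤ)))⁻¹)
          = tetraS ^ (-(k:ℤ)) * (tetraS⁻¹ * transBy ((a : ℝ), (b : ℝ), 0) * tetraS) * (tetraS ^ (-(k:ℤ)))⁻¹ := by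
            group
        _ = tetraS ^ (-(k:ℤ)) * transBy ((b : ℝ), (-a : ℝ), 0) * (tetraS ^ (-(k:ℤ)))⁻¹ := by
            rw [conj_transBy_inv]
        _ = transBy ((c : ℝ), (d : ℝ), 0) := hcd

/-- The "normal form" subgroup. -/
noncomputable def tetraH : Subgroup (Equiv.Perm (ℝ × ℝ × ℝ)) where
  carrier := {g | ∃ a b k : ℤ, g = transBy ((a : ℝ), (b : ℝ), 0) * tetraS ^ k}
  one_mem' := ⟨0, 0, 0, by simp [transBy_zero', transBy_zero]⟩
  mul_mem' := by
    rintro g h ⟨a, b, k, rfl⟩ ⟨c, d, m, rfl⟩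
    obtain ⟨e, f, hef⟩ := tetraConjZpow k c d
    refine ⟨a + e, b + f, k + m, ?_⟩
    have : transBy ((a:ℝ), (b:ℝ), 0) * tetraS ^ k * (transBy ((c:ℝ), (d:ℝ), 0) * tetraS ^ m)
        = transBy ((a:ℝ), (b:ℝ), 0) *
          (tetraS ^ k * transBy ((c:ℝ), (d:ℝ), 0) * (tetraS ^ k)⁻¹) * tetraS ^ (k + m) := by
      rw [zpow_add]; group
    rw [this, hef, transBy_mul]
    push_cast
    ring_nf
  inv_mem' := by
    rintro g ⟨a, b, k, rfl⟩
    obtain ⟨e, f, hef⟩ := tetraConjZpow (-k) (-a) (-b)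
    push_cast at hef
    refine ⟨e, f, -k, ?_⟩
    have h1 : (transBy ((a:ℝ), (b:ℝ), 0))⁻¹ = transBy ((-a : ℝ), (-b : ℝ), 0) := by
      rw [inv_eq_iff_mul_eq_one, transBy_mul]; simpa using transBy_zero
    rw [mul_inv_rev, h1, ← zpow_neg]
    calc tetraS ^ (-k) * transBy ((-a:ℝ), (-b:ℝ), 0)
        = (tetraS ^ (-k) * transBy ((-a:ℝ), (-b:ℝ), 0) * (tetraS ^ (-k))⁻¹) * tetraS ^ (-k) := by
          group
      _ = transBy ((e:ℝ), (f:ℝ), 0) * tetraS ^ (-k) := by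
          rw [hef]

lemma tetraS_zpow_z (k : ℤ) : ∀ p : ℝ × ℝ × ℝ, ((tetraS ^ k) p).2.2 = p.2.2 + k / 4 := by
  induction k using Int.induction_on with
  | zero => intro p; simp
  | succ k ih =>
      intro p
      rw [zpow_add_one]
      have : (tetraS ^ (k:ℤ) * tetraS) p = (tetraS ^ (k:ℤ)) (tetraS p) := rfl
      rw [this, ih, tetraS_apply]
      push_cast; ring
  | pred k ih =>
      intro p
      rw [zpow_sub_one]
      have : (tetraS ^ (-(k:ℤ)) * tetraS⁻¹) p = (tetraS ^ (-(k:ℤ))) (tetraS⁻¹ p) := rfl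
      rw [this, ih, tetraS_inv_apply]
      push_cast; ring

/-- The tetracosm space group acts freely on `ℝ³`, and `S⁴` is the translation
by `(0,0,1)`. -/
theorem tetraGroup_acts_freely :
    (∀ g ∈ tetraGroup, ∀ p : ℝ × ℝ × ℝ, g p = p → g = 1) ∧
    tetraS ^ 4 = transBy (0, 0, 1) := by
  constructor
  · intro g hg p hfix
    have hle : tetraGroup ≤ tetraH := by
      rw [tetraGroup, Subgroup.closure_le]
      rintro x (rfl | rfl | rfl)
      · exact ⟨0, 0, 1, by simp [transBy_zero', transBy_zero]⟩
      · exact ⟨1, 0, 0, by simp⟩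
      · exact ⟨0, 1, 0, by simp⟩
    obtain ⟨a, b, k, rfl⟩ := hle hg
    have happ : (transBy ((a:ℝ), (b:ℝ), 0) * tetraS ^ k) p
        = transBy ((a:ℝ), (b:ℝ), 0) ((tetraS ^ k) p) := rfl
    have hz : ((transBy ((a:ℝ), (b:ℝ), 0) * tetraS ^ k) p).2.2 = p.2.2 + k / 4 := by
      rw [happ, transBy_apply, tetraS_zpow_z]; simp
    rw [hfix] at hz
    have hk : (k : ℝ) = 0 := by linarith
    have hk0 : k = 0 := by exact_mod_cast hk
    subst hk0
    simp only [zpow_zero, mul_one] at hfix ⊢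
    have hx := congrArg Prod.fst hfix
    have hy := congrArg (fun q => q.2.1) hfix
    simp [transBy_apply] at hx hy
    subst hx; subst hy
    simpa using transBy_zero
  · ext p <;>
      simp [pow_succ, tetraS_apply, transBy_apply, Equiv.Perm.mul_apply] <;> ring
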